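/- Let k be a field, let φ : k[x,y] → k[t] × k[t] be the k-algebra homomorphism with φ(x) = (t, t) and φ(y) = (0, t^2), and let R be the image of φ. Then the conductor of R in k[t] × k[t], namely {(a,b) ∈ k[t] × k[t] : (a·f, b·g) ∈ R for all (f,g) ∈ k[t] × k[t]}, equals t^2·k[t] × t^2·k[t], the ideal of k[t] × k[t] generated by (t^2, 0) and (0, t^2). -/

import Mathlib

open Polynomial

noncomputable def tacV (k : Type*) [Field k] : Fin 2 → Polynomial k × Polynomial k :=
  ![(Polynomial.X, Polynomial.X), ((0 : Polynomial k), Polynomial.X ^ 2)]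

noncomputable def tacPhi (k : Type*) [Field k] :
    MvPolynomial (Fin 2) k →ₐ[k] Polynomial k × Polynomial k :=
  MvPolynomial.aeval (tacV k)

lemma tac_diag (k : Type*) [Field k] (h : Polynomial k) :
    (h, h) ∈ (tacPhi k).range := by
  refine ⟨Polynomial.aeval (MvPolynomial.X 0) h, ?_⟩
  show (tacPhi k) (Polynomial.aeval (MvPolynomial.X 0) h) = (h, h)
  have e1 := Polynomial.aeval_algHom_apply
    (F := MvPolynomial (Fin 2) k →ₐ[k] Polynomial k × Polynomial k)
    (tacPhi k) (MvPolynomial.X 0) h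
  rw [← e1]
  have : (tacPhi k) (MvPolynomial.X 0) = ((X : Polynomial k), (X : Polynomial k)) := by
    simp [tacPhi, tacV]
  rw [this]
  refine Prod.ext ?_ ?_
  · exact (Polynomial.aeval_algHom_apply (AlgHom.fst k (Polynomial k) (Polynomial k)) ((X:Polynomial k), (X:Polynomial k)) h).symm.trans
      (Polynomial.aeval_X_left_apply h)
  · exact (Polynomial.aeval_algHom_apply (AlgHom.snd k (Polynomial k) (Polynomial k)) ((X:Polynomial k), (X:Polynomial k)) h).symm.trans
      (Polynomial.aeval_X_left_apply h)

lemma tac_div (k : Type*) [Field k] (q : MvPolynomial (Fin 2) k) :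
    (X : Polynomial k) ^ 2 ∣ ((tacPhi k) q).1 - ((tacPhi k) q).2 := by
  induction q using MvPolynomial.induction_on with
  | C c => simp
  | add p q hp hq =>
      simp only [map_add, Prod.fst_add, Prod.snd_add]
      have : ((tacPhi k) p).1 + ((tacPhi k) q).1 -
          (((tacPhi k) p).2 + ((tacPhi k) q).2) =
          (((tacPhi k) p).1 - ((tacPhi k) p).2) +
          (((tacPhi k) q).1 - ((tacPhi k) q).2) := by ring
      rw [this]; exact dvd_add hp hq
  | mul_X p i hp =>
      rw [map_mul, show (tacPhi k) (MvPolynomial.X i) = tacV k i from MvPolynomial.aeval_X _ i]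
      fin_cases i
      · simp only [tacPhi, tacV, Matrix.cons_val_zero, Prod.fst_mul, Prod.snd_mul]
        have := hp.mul_right (X : Polynomial k)
        rwa [sub_mul] at this
      · show (X:Polynomial k)^2 ∣ ((tacPhi k) p * ((0:Polynomial k), (X:Polynomial k)^2)).1 -
            ((tacPhi k) p * ((0:Polynomial k), (X:Polynomial k)^2)).2
        simp only [Prod.fst_mul, Prod.snd_mul, mul_zero, zero_sub, dvd_neg]
        exact dvd_mul_left _ _

/-- The conductor of the image of `k[x,y] → k[t] × k[t]` (`x ↦ (t,t)`, `y ↦ (0,t²)`,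
the normalization of the tacnode) in `k[t] × k[t]` is `t²k[t] × t²k[t]`, the ideal
generated by `(t²,0)` and `(0,t²)`. -/
theorem conductor_tacnode (k : Type*) [Field k] (p : Polynomial k × Polynomial k) :
    ((∀ q : Polynomial k × Polynomial k,
        p * q ∈ (MvPolynomial.aeval
          (![(Polynomial.X, Polynomial.X), ((0 : Polynomial k), Polynomial.X ^ 2)] :
            Fin 2 → Polynomial k × Polynomial k) :
          MvPolynomial (Fin 2) k →ₐ[k] Polynomial k × Polynomial k).range) ↔
      p ∈ Ideal.span ({((Polynomial.X ^ 2 : Polynomial k), (0 : Polynomial k)),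
        ((0 : Polynomial k), (Polynomial.X ^ 2 : Polynomial k))} :
          Set (Polynomial k × Polynomial k))) ∧
    ((∀ q : Polynomial k × Polynomial k,
        p * q ∈ (MvPolynomial.aeval
          (![(Polynomial.X, Polynomial.X), ((0 : Polynomial k), Polynomial.X ^ 2)] :
            Fin 2 → Polynomial k × Polynomial k) :
          MvPolynomial (Fin 2) k →ₐ[k] Polynomial k × Polynomial k).range) ↔
      (p.1 ∈ Ideal.span ({Polynomial.X ^ 2} : Set (Polynomial k)) ∧
       p.2 ∈ Ideal.span ({Polynomial.X ^ 2} : Set (Polynomial k)))) := by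
  have key : (∀ q : Polynomial k × Polynomial k,
      p * q ∈ (tacPhi k).range) ↔
      ((X : Polynomial k) ^ 2 ∣ p.1 ∧ (X : Polynomial k) ^ 2 ∣ p.2) := by
    constructor
    · intro h
      constructor
      · have h1 := h (1, 0)
        obtain ⟨q, hq⟩ := h1
        have hq' : (tacPhi k) q = p * (1, 0) := hq
        have := tac_div k q
        rw [hq'] at this
        simpa using this
      · have h2 := h (0, 1)
        obtain ⟨q, hq⟩ := h2
        have hq' : (tacPhi k) q = p * (0, 1) := hq
        have := tac_div k q
        rw [hq'] at this
        simpa using this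
    · rintro ⟨⟨a, ha⟩, ⟨b, hb⟩⟩ q
      -- p * q = (p.1 q.1, p.2 q.2) = (X² a q.1, X² b q.2)
      have hmem : ∀ a b : Polynomial k, ((X:Polynomial k)^2 * a, (X:Polynomial k)^2 * b) ∈
          (tacPhi k).range := by
        intro a b
        have e : ((X:Polynomial k)^2 * a, (X:Polynomial k)^2 * b) =
            ((X:Polynomial k)^2, (X:Polynomial k)^2) * (a, a) +
            ((0:Polynomial k), (X:Polynomial k)^2) * (b - a, b - a) := by
          apply Prod.ext <;> simp <;> ring
        rw [e]
        apply add_mem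
        · exact mul_mem (by simpa using tac_diag k (X^2)) (tac_diag k a)
        · refine mul_mem ⟨MvPolynomial.X 1, by simp [tacPhi, tacV]⟩ (tac_diag k (b - a))
      have : p * q = ((X:Polynomial k)^2 * (a * q.1), (X:Polynomial k)^2 * (b * q.2)) := by
        apply Prod.ext <;> simp [ha, hb] <;> ring
      rw [this]; exact hmem _ _
  have hspan : p ∈ Ideal.span ({((Polynomial.X ^ 2 : Polynomial k), (0 : Polynomial k)),
        ((0 : Polynomial k), (Polynomial.X ^ 2 : Polynomial k))} :
          Set (Polynomial k × Polynomial k)) ↔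
      ((X : Polynomial k) ^ 2 ∣ p.1 ∧ (X : Polynomial k) ^ 2 ∣ p.2) := by
    rw [Ideal.mem_span_pair]
    constructor
    · rintro ⟨a, b, hab⟩
      constructor
      · refine ⟨a.1, ?_⟩
        have := congrArg Prod.fst hab
        simpa [mul_comm] using this.symm
      · refine ⟨b.2, ?_⟩
        have := congrArg Prod.snd hab
        simpa [mul_comm] using this.symm
    · rintro ⟨⟨a, ha⟩, ⟨b, hb⟩⟩
      exact ⟨(a, 0), (0, b), by apply Prod.ext <;> simp [ha, hb] <;> ring⟩
  have hV : ∀ q, (p * q ∈ (MvPolynomial.aeval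
          (![(Polynomial.X, Polynomial.X), ((0 : Polynomial k), Polynomial.X ^ 2)] :
            Fin 2 → Polynomial k × Polynomial k) :
          MvPolynomial (Fin 2) k →ₐ[k] Polynomial k × Polynomial k).range) ↔
      p * q ∈ (tacPhi k).range := fun q => Iff.rfl
  simp only [hV]
  constructor
  · rw [key, hspan]
  · rw [key, Ideal.mem_span_singleton, Ideal.mem_span_singleton]
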